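/- Fluctuation–stabilization estimate used in the stability proof: Let d ≥ 1, let w'_1,…,w'_J : ℝ^d → ℝ^d be C¹ compactly supported vector fields with div w'_j = 0 everywhere for each j, and let v, ṽ : ℝ^d → ℝ^d be C¹ compactly supported vector fields. Define l(x) := max_{1≤j≤J} |w'_j(x)|. Then for each j ∈ {1,…,J}: |b(w'_j, v, ṽ)| ≤ (∫_{ℝ^d} l(x)²·‖Dṽ(x)‖_F² dx)^{1/2} · ‖ṽ − v‖. -/

import Mathlib

open MeasureTheory Finset RealInnerProductSpace

noncomputable section

abbrev Euc (d : ℕ) := EuclideanSpace ℝ (Fin d)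

def eb {d : ℕ} (i : Fin d) : Euc d := EuclideanSpace.single i 1

def frobInner {d : ℕ} (A B : Euc d →L[ℝ] Euc d) : ℝ :=
  ∑ i : Fin d, ⟪A (eb i), B (eb i)⟫

/-- Frobenius norm of a linear map on `Euc d`. -/
def frobNorm {d : ℕ} (A : Euc d →L[ℝ] Euc d) : ℝ := Real.sqrt (frobInner A A)

def l2norm {d : ℕ} (φ : Euc d → Euc d) : ℝ := Real.sqrt (∫ x, ‖φ x‖^2)

def divg {d : ℕ} (φ : Euc d → Euc d) (x : Euc d) : ℝ :=
  ∑ i : Fin d, ⟪fderiv ℝ φ x (eb i), eb i⟫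

def triForm {d : ℕ} (u v w : Euc d → Euc d) : ℝ :=
  ∫ x, ⟪fderiv ℝ v x (u x), w x⟫

set_option maxHeartbeats 1000000

/-! ### Auxiliary lemmas -/

lemma euc_sum_single {d : ℕ} (y : Euc d) : ∑ i, ⟪eb i, y⟫ • eb i = y := by
  have := (EuclideanSpace.basisFun (Fin d) ℝ).sum_repr' y
  simpa [eb, EuclideanSpace.basisFun_apply] using this

lemma clmap_sum {d : ℕ} {F : Type*} [NormedAddCommGroup F] [NormedSpace ℝ F]
    (A : Euc d →L[ℝ] F) (y : Euc d) : A y = ∑ i, ⟪eb i, y⟫ • A (eb i) := by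
  conv_lhs => rw [← euc_sum_single y, map_sum]
  simp

lemma frobNorm_nonneg {d : ℕ} (A : Euc d →L[ℝ] Euc d) : 0 ≤ frobNorm A :=
  Real.sqrt_nonneg _

lemma frobNorm_sq {d : ℕ} (A : Euc d →L[ℝ] Euc d) :
    frobNorm A ^ 2 = ∑ i, ‖A (eb i)‖ ^ 2 := by
  rw [frobNorm, Real.sq_sqrt]
  · exact Finset.sum_congr rfl fun i _ => real_inner_self_eq_norm_sq _
  · exact Finset.sum_nonneg fun i _ => real_inner_self_nonneg

lemma norm_apply_le_frobNorm {d : ℕ} (A : Euc d →L[ℝ] Euc d) (u : Euc d) :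
    ‖A u‖ ≤ frobNorm A * ‖u‖ := by
  have h1 : ‖A u‖ ≤ ∑ i, |⟪eb i, u⟫| * ‖A (eb i)‖ := by
    conv_lhs => rw [clmap_sum A u]
    refine (norm_sum_le _ _).trans (Finset.sum_le_sum fun i _ => ?_)
    rw [norm_smul, Real.norm_eq_abs]
  have h2 : (∑ i, |⟪eb i, u⟫| * ‖A (eb i)‖) ^ 2
      ≤ (∑ i, |⟪eb i, u⟫| ^ 2) * (∑ i, ‖A (eb i)‖ ^ 2) :=
    Finset.sum_mul_sq_le_sq_mul_sq _ _ _
  have hu : (∑ i, |⟪eb i, u⟫| ^ 2) ≤ ‖u‖ ^ 2 := by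
    have hP := (EuclideanSpace.basisFun (Fin d) ℝ).sum_inner_mul_inner u u
    simp only [EuclideanSpace.basisFun_apply] at hP
    have h4 : (∑ i, |⟪eb i, u⟫| ^ 2)
        = ∑ i, ⟪u, EuclideanSpace.single i (1:ℝ)⟫ * ⟪EuclideanSpace.single i (1:ℝ), u⟫ := by
      refine Finset.sum_congr rfl fun i _ => ?_
      show |⟪EuclideanSpace.single i (1:ℝ), u⟫| ^ 2 = _
      rw [sq_abs, sq, real_inner_comm (EuclideanSpace.single i (1:ℝ)) u]
    rw [h4, hP, real_inner_self_eq_norm_sq]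
  have key : ‖A u‖ ^ 2 ≤ (frobNorm A * ‖u‖) ^ 2 := by
    rw [mul_pow, frobNorm_sq]
    calc ‖A u‖ ^ 2 ≤ (∑ i, |⟪eb i, u⟫| * ‖A (eb i)‖) ^ 2 :=
          pow_le_pow_left₀ (norm_nonneg _) h1 2
      _ ≤ (∑ i, |⟪eb i, u⟫| ^ 2) * (∑ i, ‖A (eb i)‖ ^ 2) := h2
      _ ≤ ‖u‖ ^ 2 * ∑ i, ‖A (eb i)‖ ^ 2 := by
          apply mul_le_mul_of_nonneg_right hu
          exact Finset.sum_nonneg fun i _ => sq_nonneg _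
      _ = (∑ i, ‖A (eb i)‖ ^ 2) * ‖u‖ ^ 2 := mul_comm _ _
  have h3 := Real.sqrt_le_sqrt key
  rwa [Real.sqrt_sq (norm_nonneg _),
    Real.sqrt_sq (mul_nonneg (frobNorm_nonneg A) (norm_nonneg _))] at h3

/-- continuity/support helper: `x ↦ fderiv f x u` is continuous with compact support. -/
lemma fderiv_apply_cont {d : ℕ} {f : Euc d → Euc d} (hf : ContDiff ℝ 1 f)
    (u : Euc d) : Continuous fun x => fderiv ℝ f x u :=
  (hf.continuous_fderiv one_ne_zero).clm_apply continuous_const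

lemma fderiv_apply_cs {d : ℕ} {f : Euc d → Euc d} (hfs : HasCompactSupport f)
    (u : Euc d) : HasCompactSupport fun x => fderiv ℝ f x u :=
  (hfs.fderiv ℝ).comp_left (g := fun A : Euc d →L[ℝ] Euc d => A u) rfl

lemma triForm_antisymm {d : ℕ} (w a b : Euc d → Euc d)
    (hw : ContDiff ℝ 1 w) (hws : HasCompactSupport w) (hdiv : ∀ x, divg w x = 0)
    (ha : ContDiff ℝ 1 a) (has : HasCompactSupport a)
    (hb : ContDiff ℝ 1 b) (hbs : HasCompactSupport b) :
    triForm w a b = - triForm w b a := by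
  classical
  set p : Euc d → ℝ := fun x => ⟪a x, b x⟫ with hp
  have hpc : ContDiff ℝ 1 p := ContDiff.inner ℝ ha hb
  have hwc := hw.continuous
  have hac := ha.continuous
  have hbc := hb.continuous
  have hwd := hw.differentiable one_ne_zero
  have had := ha.differentiable one_ne_zero
  have hbd := hb.differentiable one_ne_zero
  have hpd := hpc.differentiable one_ne_zero
  have hpdc : Continuous (fderiv ℝ p) := hpc.continuous_fderiv one_ne_zero
  -- coordinates of w
  set wi : Fin d → Euc d → ℝ := fun i x => ⟪eb i, w x⟫ with hwi
  have hwic : ∀ i, Continuous (wi i) := fun i => continuous_const.inner hwc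
  have hwics : ∀ i, HasCompactSupport (wi i) := fun i =>
    hws.comp_left (g := fun y => ⟪eb i, y⟫) (by simp)
  have hwid : ∀ i, Differentiable ℝ (wi i) := fun i x =>
    ((innerSL ℝ (eb i)).differentiableAt).comp x (hwd x)
  have hwideriv : ∀ i x, fderiv ℝ (wi i) x (eb i) = ⟪eb i, fderiv ℝ w x (eb i)⟫ := by
    intro i x
    have h : wi i = (innerSL ℝ (eb i)) ∘ w := rfl
    rw [h, fderiv_comp x ((innerSL ℝ (eb i)).differentiableAt) (hwd x),
      (innerSL ℝ (eb i)).fderiv]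
    rfl
  -- compact support and integrability of the relevant integrands
  have hintab : Integrable (fun x => ⟪fderiv ℝ a x (w x), b x⟫) := by
    apply Continuous.integrable_of_hasCompactSupport
    · exact ((ha.continuous_fderiv one_ne_zero).clm_apply hwc).inner hbc
    · refine hbs.mono fun x hx => ?_
      simp only [Function.mem_support] at hx ⊢
      intro h0; exact hx (by rw [h0, inner_zero_right])
  have hintba : Integrable (fun x => ⟪fderiv ℝ b x (w x), a x⟫) := by
    apply Continuous.integrable_of_hasCompactSupport
    · exact ((hb.continuous_fderiv one_ne_zero).clm_apply hwc).inner hac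
    · refine has.mono fun x hx => ?_
      simp only [Function.mem_support] at hx ⊢
      intro h0; exact hx (by rw [h0, inner_zero_right])
  have hintI : ∀ i, Integrable (fun x => wi i x * fderiv ℝ p x (eb i)) := by
    intro i
    apply Continuous.integrable_of_hasCompactSupport
    · exact (hwic i).mul (hpdc.clm_apply continuous_const)
    · exact ((hwics i).mul_right)
  have hintJ : ∀ i, Integrable (fun x => fderiv ℝ (wi i) x (eb i) * p x) := by
    intro i
    have base : Integrable (fun x => ⟪eb i, fderiv ℝ w x (eb i)⟫ * p x) := by
      apply Continuous.integrable_of_hasCompactSupport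
      · exact (continuous_const.inner (fderiv_apply_cont hw (eb i))).mul (hac.inner hbc)
      · exact ((hws.fderiv ℝ).comp_left
          (g := fun A : Euc d →L[ℝ] Euc d => ⟪eb i, A (eb i)⟫) (by simp)).mul_right
    exact base.congr (Filter.Eventually.of_forall fun x => by simp only []; rw [hwideriv i x])
  have hintwp : ∀ i, Integrable (fun x => wi i x * p x) := fun i =>
    Continuous.integrable_of_hasCompactSupport ((hwic i).mul (hac.inner hbc))
      ((hwics i).mul_right)
  -- Step 1: the sum of the two trilinear forms is the integral of the derivative of p along w
  have S1 : triForm w a b + triForm w b a = ∫ x, fderiv ℝ p x (w x) := by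
    rw [triForm, triForm, ← integral_add hintab hintba]
    refine integral_congr_ae (Filter.Eventually.of_forall fun x => ?_)
    have := fderiv_inner_apply ℝ (had x) (hbd x) (w x)
    rw [hp]
    simp only []
    rw [this, real_inner_comm (fderiv ℝ b x (w x)) (a x)]
    ring
  -- Step 2: expand along the basis
  have S2 : ∫ x, fderiv ℝ p x (w x) = ∑ i, ∫ x, wi i x * fderiv ℝ p x (eb i) := by
    rw [← integral_finset_sum _ fun i _ => hintI i]
    refine integral_congr_ae (Filter.Eventually.of_forall fun x => ?_)
    show (fderiv ℝ p x) (w x) = ∑ i, wi i x * fderiv ℝ p x (eb i)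
    rw [clmap_sum (fderiv ℝ p x) (w x)]
    exact Finset.sum_congr rfl fun i _ => smul_eq_mul ..
  -- Step 3: integrate by parts in each coordinate direction
  have S3 : ∀ i, ∫ x, wi i x * fderiv ℝ p x (eb i)
      = - ∫ x, fderiv ℝ (wi i) x (eb i) * p x := fun i =>
    integral_mul_fderiv_eq_neg_fderiv_mul_of_integrable (hintJ i) (hintI i) (hintwp i)
      (fun x _ => hwid i x) (fun x _ => hpd x)
  -- Step 4: summation gives zero by divergence-freeness
  have S4 : (∑ i, ∫ x, fderiv ℝ (wi i) x (eb i) * p x) = 0 := by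
    rw [← integral_finset_sum _ fun i _ => hintJ i]
    have : ∀ x, (∑ i, fderiv ℝ (wi i) x (eb i) * p x) = 0 := by
      intro x
      rw [← Finset.sum_mul]
      have hsum : (∑ i, fderiv ℝ (wi i) x (eb i)) = divg w x := by
        rw [divg]
        exact Finset.sum_congr rfl fun i _ => by
          rw [hwideriv i x, real_inner_comm]
      rw [hsum, hdiv x, zero_mul]
    simp only [this, integral_zero]
  have : triForm w a b + triForm w b a = 0 := by
    rw [S1, S2]
    calc (∑ i, ∫ x, wi i x * fderiv ℝ p x (eb i))
        = ∑ i, -∫ x, fderiv ℝ (wi i) x (eb i) * p x := Finset.sum_congr rfl fun i _ => S3 i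
      _ = -∑ i, ∫ x, fderiv ℝ (wi i) x (eb i) * p x := by rw [Finset.sum_neg_distrib]
      _ = 0 := by rw [S4, neg_zero]
  linarith

lemma hcs_sub {α β : Type*} [TopologicalSpace α] [AddGroup β]
    {f g : α → β} (hf : HasCompactSupport f) (hg : HasCompactSupport g) :
    HasCompactSupport (fun x => f x - g x) := by
  have h := hf.add (hg.comp_left (g := fun y : β => -y) neg_zero)
  rw [show (fun x => f x - g x) = f + (fun y : β => -y) ∘ g from
    funext fun x => sub_eq_add_neg _ _]
  exact h

/-- Fluctuation–stabilization estimate used in the stability proof. -/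
theorem fluctuation_stabilization_estimate
    (d : ℕ) (hd : 1 ≤ d) (J : ℕ)
    (w' : Fin J → Euc d → Euc d)
    (hw' : ∀ j, ContDiff ℝ 1 (w' j) ∧ HasCompactSupport (w' j) ∧ ∀ x, divg (w' j) x = 0)
    (v vt : Euc d → Euc d)
    (hv : ContDiff ℝ 1 v) (hvs : HasCompactSupport v)
    (hvt : ContDiff ℝ 1 vt) (hvts : HasCompactSupport vt)
    (j : Fin J) :
    |triForm (w' j) v vt|
      ≤ Real.sqrt (∫ x, (⨆ i : Fin J, ‖w' i x‖)^2 * frobNorm (fderiv ℝ vt x)^2)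
        * l2norm (fun x => vt x - v x) := by
  classical
  obtain ⟨hwc1, hwcs, hwdiv⟩ := hw' j
  set w := w' j with hww
  have hwc := hwc1.continuous
  have hvtc := hvt.continuous
  have hvc := hv.continuous
  have hvtdc : Continuous (fderiv ℝ vt) := hvt.continuous_fderiv one_ne_zero
  -- integrability of the basic inner products
  have hint1 : Integrable (fun x => ⟪fderiv ℝ vt x (w x), vt x⟫) := by
    apply Continuous.integrable_of_hasCompactSupport
    · exact (hvtdc.clm_apply hwc).inner hvtc
    · refine hvts.mono fun x hx => ?_
      simp only [Function.mem_support] at hx ⊢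
      intro h0; exact hx (by rw [h0, inner_zero_right])
  have hint2 : Integrable (fun x => ⟪fderiv ℝ vt x (w x), v x⟫) := by
    apply Continuous.integrable_of_hasCompactSupport
    · exact (hvtdc.clm_apply hwc).inner hvc
    · refine hvs.mono fun x hx => ?_
      simp only [Function.mem_support] at hx ⊢
      intro h0; exact hx (by rw [h0, inner_zero_right])
  -- Step 1: rewrite the trilinear form using antisymmetry
  have e1 : triForm w v vt = - triForm w vt v :=
    triForm_antisymm w v vt hwc1 hwcs hwdiv hv hvs hvt hvts
  have e2 : triForm w vt vt = - triForm w vt vt :=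
    triForm_antisymm w vt vt hwc1 hwcs hwdiv hvt hvts hvt hvts
  have e2' : triForm w vt vt = 0 := by linarith
  have h1 : triForm w v vt = ∫ x, ⟪fderiv ℝ vt x (w x), vt x - v x⟫ := by
    have hsplit : (fun x => ⟪fderiv ℝ vt x (w x), vt x - v x⟫)
        = fun x => ⟪fderiv ℝ vt x (w x), vt x⟫ - ⟪fderiv ℝ vt x (w x), v x⟫ := by
      funext x; rw [inner_sub_right]
    rw [hsplit, integral_sub hint1 hint2]
    have : (∫ x, ⟪fderiv ℝ vt x (w x), vt x⟫) = triForm w vt vt := rfl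
    rw [this, e2', e1]
    have : (∫ x, ⟪fderiv ℝ vt x (w x), v x⟫) = triForm w vt v := rfl
    rw [this]; ring
  -- the envelope function l
  set l : Euc d → ℝ := fun x => ⨆ i : Fin J, ‖w' i x‖ with hl
  have hne : Nonempty (Fin J) := ⟨j⟩
  have hlc : Continuous l := by
    have hl_eq : l = fun x => Finset.univ.sup' Finset.univ_nonempty (fun i => ‖w' i x‖) := by
      funext x; rw [Finset.sup'_univ_eq_ciSup]
    rw [hl_eq]
    exact Continuous.finset_sup'_apply _ fun i _ => (hw' i).1.continuous.norm
  have hl_ge : ∀ x, ‖w x‖ ≤ l x := fun x =>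
    le_ciSup (Set.Finite.bddAbove (Set.finite_range fun i => ‖w' i x‖)) j
  have hl_nonneg : ∀ x, 0 ≤ l x := fun x => (norm_nonneg _).trans (hl_ge x)
  -- frobNorm of fderiv vt : continuity and compact support
  have hfrobc : Continuous fun x => frobNorm (fderiv ℝ vt x) := by
    show Continuous fun x =>
      Real.sqrt (∑ i, ⟪fderiv ℝ vt x (eb i), fderiv ℝ vt x (eb i)⟫)
    exact Real.continuous_sqrt.comp (continuous_finset_sum _ fun i _ =>
      (fderiv_apply_cont hvt (eb i)).inner (fderiv_apply_cont hvt (eb i)))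
  have hfrobcs : HasCompactSupport fun x => frobNorm (fderiv ℝ vt x) :=
    (hvts.fderiv ℝ).comp_left (g := frobNorm) (by simp [frobNorm, frobInner])
  -- the two L² factors
  set f : Euc d → ℝ := fun x => l x * frobNorm (fderiv ℝ vt x) with hf
  set g : Euc d → ℝ := fun x => ‖vt x - v x‖ with hg
  have hfc : Continuous f := hlc.mul hfrobc
  have hfcs : HasCompactSupport f := hfrobcs.mul_left
  have hgc : Continuous g := (hvtc.sub hvc).norm
  have hgcs : HasCompactSupport g := (hcs_sub hvts hvs).norm
  have hf_nonneg : ∀ x, 0 ≤ f x := fun x =>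
    mul_nonneg (hl_nonneg x) (frobNorm_nonneg _)
  have h2 : ENNReal.ofReal (2:ℝ) = 2 := by norm_num
  have hfL2 : MemLp f (ENNReal.ofReal (2:ℝ)) := by
    rw [h2]; exact hfc.memLp_of_hasCompactSupport hfcs
  have hgL2 : MemLp g (ENNReal.ofReal (2:ℝ)) := by
    rw [h2]; exact hgc.memLp_of_hasCompactSupport hgcs
  have hpq : Real.HolderConjugate 2 2 := Real.HolderConjugate.two_two
  have CS := integral_mul_le_Lp_mul_Lq_of_nonneg hpq
    (Filter.Eventually.of_forall hf_nonneg)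
    (Filter.Eventually.of_forall fun x => norm_nonneg _) hfL2 hgL2
  -- integrability for the pointwise comparison
  have hint3 : Integrable (fun x => |⟪fderiv ℝ vt x (w x), vt x - v x⟫|) := by
    apply Continuous.integrable_of_hasCompactSupport
    · exact ((hvtdc.clm_apply hwc).inner (hvtc.sub hvc)).abs
    · refine (hcs_sub hvts hvs).mono fun x hx => ?_
      simp only [Function.mem_support] at hx ⊢
      intro h0; exact hx (by rw [h0, inner_zero_right, abs_zero])
  have hintfg : Integrable (fun x => f x * g x) :=
    Continuous.integrable_of_hasCompactSupport (hfc.mul hgc) hgcs.mul_left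
  -- pointwise comparison
  have hptw : ∀ x, |⟪fderiv ℝ vt x (w x), vt x - v x⟫| ≤ f x * g x := by
    intro x
    calc |⟪fderiv ℝ vt x (w x), vt x - v x⟫|
        ≤ ‖fderiv ℝ vt x (w x)‖ * ‖vt x - v x‖ := abs_real_inner_le_norm _ _
      _ ≤ (frobNorm (fderiv ℝ vt x) * ‖w x‖) * ‖vt x - v x‖ :=
          mul_le_mul_of_nonneg_right (norm_apply_le_frobNorm _ _) (norm_nonneg _)
      _ ≤ (frobNorm (fderiv ℝ vt x) * l x) * ‖vt x - v x‖ := by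
          apply mul_le_mul_of_nonneg_right _ (norm_nonneg _)
          exact mul_le_mul_of_nonneg_left (hl_ge x) (frobNorm_nonneg _)
      _ = f x * g x := by rw [hf, hg]; ring
  -- identify the Hölder factors with the square roots
  have hf2 : (∫ x, f x ^ (2:ℝ)) ^ ((1:ℝ)/2)
      = Real.sqrt (∫ x, l x ^ 2 * frobNorm (fderiv ℝ vt x) ^ 2) := by
    rw [Real.sqrt_eq_rpow]
    congr 1
    refine integral_congr_ae (Filter.Eventually.of_forall fun x => ?_)
    show f x ^ (2:ℝ) = l x ^ 2 * frobNorm (fderiv ℝ vt x) ^ 2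
    rw [show f x ^ (2:ℝ) = f x ^ (2:ℕ) from Real.rpow_natCast _ 2]
    show (l x * frobNorm (fderiv ℝ vt x)) ^ 2 = _
    ring
  have hg2 : (∫ x, g x ^ (2:ℝ)) ^ ((1:ℝ)/2) = l2norm (fun x => vt x - v x) := by
    rw [l2norm, Real.sqrt_eq_rpow]
    congr 1
    refine integral_congr_ae (Filter.Eventually.of_forall fun x => ?_)
    show g x ^ (2:ℝ) = ‖vt x - v x‖ ^ 2
    rw [show g x ^ (2:ℝ) = g x ^ (2:ℕ) from Real.rpow_natCast _ 2]
  calc |triForm w v vt| = |∫ x, ⟪fderiv ℝ vt x (w x), vt x - v x⟫| := by rw [h1]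
    _ ≤ ∫ x, |⟪fderiv ℝ vt x (w x), vt x - v x⟫| := by
        simpa [Real.norm_eq_abs] using
          norm_integral_le_integral_norm (fun x => ⟪fderiv ℝ vt x (w x), vt x - v x⟫)
    _ ≤ ∫ x, f x * g x := integral_mono hint3 hintfg hptw
    _ ≤ (∫ x, f x ^ (2:ℝ)) ^ ((1:ℝ)/2) * (∫ x, g x ^ (2:ℝ)) ^ ((1:ℝ)/2) := CS
    _ = Real.sqrt (∫ x, l x ^ 2 * frobNorm (fderiv ℝ vt x) ^ 2)
        * l2norm (fun x => vt x - v x) := by rw [hf2, hg2]
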